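/- The inequality Σ_{i=1}^d x_i ≤ b, where b = Σ_{i=1}^d θ_i, defines a facet of the grlex polytope P. -/

import Mathlib

open Set Finset

/-- A polytope: convex hull of finitely many points. -/
def IsPolytope {n : ℕ} (X : Set (Fin n → ℝ)) : Prop :=
  ∃ V : Finset (Fin n → ℝ), X = convexHull ℝ (V : Set (Fin n → ℝ))

/-- Affine dimension of a set. -/
noncomputable def adim {n : ℕ} (S : Set (Fin n → ℝ)) : ℕ :=
  Module.finrank ℝ (vectorSpan ℝ S)

/-- `F` is a facet of `X`: an exposed face of affine dimension one less than `X`. -/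
def IsFacet {n : ℕ} (X F : Set (Fin n → ℝ)) : Prop :=
  IsExposed ℝ X F ∧ adim F + 1 = adim X

/-- Two vertices of `X` are adjacent if the segment joining them is an exposed face. -/
def AdjVert {n : ℕ} (X : Set (Fin n → ℝ)) (u v : Fin n → ℝ) : Prop :=
  u ≠ v ∧ u ∈ X.extremePoints ℝ ∧ v ∈ X.extremePoints ℝ ∧
    IsExposed ℝ X (segment ℝ u v)

/-- The convex cone generated by a set: all nonnegative multiples of convex combinations. -/
def coneHull {n : ℕ} (S : Set (Fin n → ℝ)) : Set (Fin n → ℝ) :=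
  {0} ∪ {p | ∃ c : ℝ, 0 ≤ c ∧ ∃ z ∈ convexHull ℝ S, p = c • z}

/-- The tangent cone of `X` at a vertex `v`:
`v + cone{x - v : x an adjacent vertex of v}`. -/
def tangentCone {n : ℕ} (X : Set (Fin n → ℝ)) (v : Fin n → ℝ) : Set (Fin n → ℝ) :=
  {p | ∃ y ∈ coneHull {z | ∃ x, AdjVert X v x ∧ z = x - v}, p = v + y}

/-- The graph (1-skeleton) of a polytope `X`, with the vertices of `X` as nodes. -/
def polyGraph {n : ℕ} (X : Set (Fin n → ℝ)) : SimpleGraph (Fin n → ℝ) where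
  Adj := AdjVert X
  symm := by
    refine ⟨fun u v h => ?_⟩
    refine ⟨h.1.symm, h.2.2.1, h.2.1, ?_⟩
    rw [segment_symm]; exact h.2.2.2
  loopless := ⟨fun u h => h.1 rfl⟩

/-- Real point corresponding to an integer point. -/
def toR {d : ℕ} (x : Fin d → ℤ) : Fin d → ℝ := fun i => (x i : ℝ)

/-- Lexicographic order comparing from the last coordinate. -/
def lexLe {d : ℕ} (x y : Fin d → ℤ) : Prop :=
  x = y ∨ ∃ i : Fin d, x i < y i ∧ ∀ k : Fin d, i < k → x k = y k

/-- Graded lexicographic order. -/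
def grlexLe {d : ℕ} (x y : Fin d → ℤ) : Prop :=
  (∑ i, x i) < (∑ i, y i) ∨ ((∑ i, x i) = (∑ i, y i) ∧ lexLe x y)

/-- Graded reverse lexicographic order. -/
def grevlexLe {d : ℕ} (x y : Fin d → ℤ) : Prop :=
  (∑ i, x i) < (∑ i, y i) ∨ ((∑ i, x i) = (∑ i, y i) ∧ lexLe y x)

/-- The grlex polytope `P = conv{x ∈ ℤᵈ : 0 ≤ x ≼_grlex θ}`. -/
def grlexP (d : ℕ) (θ : Fin d → ℤ) : Set (Fin d → ℝ) :=
  convexHull ℝ {p | ∃ x : Fin d → ℤ, (∀ i, 0 ≤ x i) ∧ grlexLe x θ ∧ p = toR x}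

/-- The grevlex polytope `Q = conv{x ∈ ℤᵈ : 0 ≤ x ≼_grevlex θ}`. -/
def grevlexQ (d : ℕ) (θ : Fin d → ℤ) : Set (Fin d → ℝ) :=
  convexHull ℝ {p | ∃ x : Fin d → ℤ, (∀ i, 0 ≤ x i) ∧ grevlexLe x θ ∧ p = toR x}

/-- `b`, the total sum of `θ`. -/
def bsum {d : ℕ} (θ : Fin d → ℤ) : ℤ := ∑ i, θ i

/-- `b̃ₖ`, the sum of the first `k` coordinates of `θ` (`k` is 1-indexed). -/
def btil {d : ℕ} (θ : Fin d → ℤ) (k : ℕ) : ℤ :=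
  ∑ i ∈ Finset.univ.filter (fun i : Fin d => (i : ℕ) < k), θ i

/-- The vertex `w = (b-1)e_d` of `P`. -/
def wP (d : ℕ) (θ : Fin d → ℤ) : Fin d → ℤ :=
  fun i => if (i : ℕ) = d - 1 then bsum θ - 1 else 0

/-- The vertex `u^k = ((b̃_{k-1}+1)e_{k-1}, θ_k - 1, θ_{k+1}, …, θ_d)` of `P` (paper's
1-indexing: coordinate `j` of the paper is index `j-1` here). -/
def uP (d : ℕ) (θ : Fin d → ℤ) (k : ℕ) : Fin d → ℤ :=
  fun i => if (i : ℕ) = k - 2 then btil θ (k - 1) + 1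
    else if (i : ℕ) = k - 1 then θ i - 1
    else if k ≤ (i : ℕ) then θ i else 0

/-- The vertex `v^{j,k} = (b̃_k e_j, 0, …, 0, θ_{k+1}, …, θ_d)` of `P` (1-indexed). -/
def vP (d : ℕ) (θ : Fin d → ℤ) (j k : ℕ) : Fin d → ℤ :=
  fun i => if (i : ℕ) = j - 1 then btil θ k
    else if k ≤ (i : ℕ) then θ i else 0

/-- The point `b·e_j` (1-indexed `j`). -/
def beP (d : ℕ) (θ : Fin d → ℤ) (j : ℕ) : Fin d → ℤ :=
  fun i => if (i : ℕ) = j - 1 then bsum θ else 0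

/-- The vertex `u^k = (b̃_{k-1}e_{k-1}, θ_k, …, θ_d)` of `Q` (1-indexed, `2 ≤ k ≤ d+1`). -/
def uQ (d : ℕ) (θ : Fin d → ℤ) (k : ℕ) : Fin d → ℤ :=
  fun i => if (i : ℕ) = k - 2 then btil θ (k - 1)
    else if k - 1 ≤ (i : ℕ) then θ i else 0

/-- The vertex `v^{j,k} = ((b̃_{k-1}-1)e_j, 0, …, 0, θ_k + 1, θ_{k+1}, …, θ_d)` of `Q`. -/
def vQ (d : ℕ) (θ : Fin d → ℤ) (j k : ℕ) : Fin d → ℤ :=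
  fun i => if (i : ℕ) = j - 1 then btil θ (k - 1) - 1
    else if (i : ℕ) = k - 1 then θ i + 1
    else if k ≤ (i : ℕ) then θ i else 0

/-- Edge boundary of a vertex set in a graph. -/
def eboundary {V : Type*} (G : SimpleGraph V) (S : Set V) : Set (V × V) :=
  {p | G.Adj p.1 p.2 ∧ p.1 ∈ S ∧ p.2 ∉ S}

noncomputable def sumL (d : ℕ) : (Fin d → ℝ) →ₗ[ℝ] ℝ := ∑ i, LinearMap.proj i

@[simp] lemma sumL_apply {d : ℕ} (x : Fin d → ℝ) : sumL d x = ∑ i, x i := by simp [sumL]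

/-- The inequality `∑ x_i ≤ b` is valid for the grlex polytope `P` and
defines a facet of `P`. -/
theorem grlexP_grading_facet (d : ℕ) (hd : 3 ≤ d) (θ : Fin d → ℤ) (hθ : ∀ i, 1 ≤ θ i) :
    (∀ x ∈ grlexP d θ, ∑ i, x i ≤ (bsum θ : ℝ)) ∧
      IsFacet (grlexP d θ) (grlexP d θ ∩ {x | ∑ i, x i = (bsum θ : ℝ)}) := by
  classical
  have hbd : (d : ℤ) ≤ bsum θ := by
    calc (d : ℤ) = ∑ _i : Fin d, 1 := by simp
    _ ≤ ∑ i, θ i := Finset.sum_le_sum (fun i _ => hθ i)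
  -- validity
  have hvalid : ∀ x ∈ grlexP d θ, ∑ i, x i ≤ (bsum θ : ℝ) := by
    intro x hx
    have hsub : grlexP d θ ⊆ {p : Fin d → ℝ | sumL d p ≤ (bsum θ : ℝ)} := by
      apply convexHull_min ?_ (convex_halfSpace_le (sumL d).isLinear _)
      rintro p ⟨y, hy0, hyle, rfl⟩
      have hle : (∑ i, y i) ≤ bsum θ := by
        rcases hyle with h | ⟨h, _⟩
        · exact le_of_lt h
        · exact le_of_eq h
      simp only [mem_setOf_eq, sumL_apply, toR]
      exact_mod_cast hle
    simpa using hsub hx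
  -- θ is in P and in F
  have hθS : toR θ ∈ grlexP d θ :=
    subset_convexHull ℝ _ ⟨θ, fun i => by linarith [hθ i], Or.inr ⟨rfl, Or.inl rfl⟩, rfl⟩
  have hθsum : ∑ i, toR θ i = (bsum θ : ℝ) := by simp [toR, bsum]
  refine ⟨hvalid, ?_, ?_⟩
  · -- exposedness
    intro _
    refine ⟨LinearMap.toContinuousLinearMap (sumL d), ?_⟩
    ext x
    simp only [mem_inter_iff, mem_setOf_eq, LinearMap.coe_toContinuousLinearMap', sumL_apply]
    constructor
    · rintro ⟨hxP, hxs⟩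
      exact ⟨hxP, fun y hy => hxs ▸ hvalid y hy⟩
    · rintro ⟨hxP, hmax⟩
      refine ⟨hxP, le_antisymm (hvalid x hxP) ?_⟩
      have := hmax _ hθS
      rwa [hθsum] at this
  · -- dimension count
    -- adim P = d
    have h0P : (0 : Fin d → ℝ) ∈ grlexP d θ := by
      apply subset_convexHull
      refine ⟨0, fun i => le_refl 0, Or.inl ?_, by funext i; simp [toR]⟩
      simpa [bsum] using lt_of_lt_of_le (by exact_mod_cast (by omega : 0 < d) : (0:ℤ) < d) hbd
    have heP : ∀ i : Fin d, (Pi.single i 1 : Fin d → ℝ) ∈ grlexP d θ := by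
      intro i
      apply subset_convexHull
      refine ⟨fun k => if k = i then 1 else 0, ?_, Or.inl ?_, ?_⟩
      · intro k; dsimp only; split_ifs <;> omega
      · simp only [Finset.sum_ite_eq', Finset.mem_univ, if_true, bsum]
        calc (1:ℤ) < d := by exact_mod_cast (by omega : 1 < d)
        _ ≤ ∑ i, θ i := hbd
      · funext k
        simp only [toR, Pi.single_apply]
        split_ifs <;> simp
    have hspanP : vectorSpan ℝ (grlexP d θ) = ⊤ := by
      refine le_antisymm le_top ?_
      rw [← (Pi.basisFun ℝ (Fin d)).span_eq]
      apply Submodule.span_le.2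
      rintro _ ⟨i, rfl⟩
      have := vsub_mem_vectorSpan ℝ (heP i) h0P
      simpa using this
    have hadimP : adim (grlexP d θ) = d := by
      rw [adim, hspanP, finrank_top]
      simp
    -- F's vectorSpan is inside the kernel of sumL
    set F := grlexP d θ ∩ {x | ∑ i, x i = (bsum θ : ℝ)} with hF
    have hFle : vectorSpan ℝ F ≤ LinearMap.ker (sumL d) := by
      rw [vectorSpan_def]
      apply Submodule.span_le.2
      rintro _ ⟨u, hu, v, hv, rfl⟩
      simp only [SetLike.mem_coe, LinearMap.mem_ker, sumL_apply, vsub_eq_sub, Pi.sub_apply]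
      rw [Finset.sum_sub_distrib, hu.2, hv.2, sub_self]
    have hker : Module.finrank ℝ (LinearMap.ker (sumL d)) = d - 1 := by
      have hsurj : LinearMap.range (sumL d) = ⊤ := by
        rw [LinearMap.range_eq_top]
        intro r
        exact ⟨Pi.single ⟨0, by omega⟩ r, by simp⟩
      have h := LinearMap.finrank_range_add_finrank_ker (sumL d)
      rw [hsurj, finrank_top] at h
      simp only [Module.finrank_self] at h
      have hd' : Module.finrank ℝ (Fin d → ℝ) = d := by simp
      omega
    -- the independent family in vectorSpan F
    set B : ℝ := (bsum θ : ℝ) with hB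
    have hBpos : 0 < B := by
      rw [hB]
      exact_mod_cast lt_of_lt_of_le (by exact_mod_cast (by omega : 0 < d) : (0:ℤ) < d) hbd
    set f : Fin (d-1) → (Fin d → ℝ) :=
      fun j => Pi.single (Fin.castLE (Nat.sub_le d 1) j) B - toR θ with hf
    have hli : LinearIndependent ℝ f := by
      rw [Fintype.linearIndependent_iff]
      intro g hg
      have happ : ∀ i : Fin d, (∑ j, g j • f j) i
          = (∑ j, g j * (if i = Fin.castLE (Nat.sub_le d 1) j then B else 0))
            - (∑ j, g j) * (θ i : ℝ) := by
        intro i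
        rw [Finset.sum_apply]
        simp only [hf, Pi.smul_apply, Pi.sub_apply, smul_eq_mul, Pi.single_apply, mul_sub, toR]
        rw [Finset.sum_sub_distrib, ← Finset.sum_mul]
      have hgsum : (∑ j, g j) = 0 := by
        have h := congrFun hg ⟨d - 1, by omega⟩
        rw [happ] at h
        simp only [Pi.zero_apply] at h
        have hz : (∑ j, g j * (if (⟨d - 1, by omega⟩ : Fin d)
            = Fin.castLE (Nat.sub_le d 1) j then B else 0)) = 0 := by
          apply Finset.sum_eq_zero
          intro j _
          have hne : (⟨d - 1, by omega⟩ : Fin d) ≠ Fin.castLE (Nat.sub_le d 1) j := by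
            intro hEq
            have := congrArg Fin.val hEq
            simp at this
            omega
          simp [hne]
        rw [hz] at h
        have hθpos : (0:ℝ) < θ ⟨d-1, by omega⟩ :=
          lt_of_lt_of_le one_pos (by exact_mod_cast hθ _)
        nlinarith [h]
      intro j₀
      have h := congrFun hg (Fin.castLE (Nat.sub_le d 1) j₀)
      rw [happ] at h
      simp only [Pi.zero_apply] at h
      have hz : (∑ j, g j * (if Fin.castLE (Nat.sub_le d 1) j₀
          = Fin.castLE (Nat.sub_le d 1) j then B else 0)) = g j₀ * B := by
        rw [Finset.sum_congr rfl (g := fun j => if j₀ = j then g j * B else 0) ?_]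
        · simp
        · intro j _
          have hiff : (Fin.castLE (Nat.sub_le d 1) j₀ = Fin.castLE (Nat.sub_le d 1) j) ↔ j₀ = j := by
            constructor
            · intro hEq; exact Fin.ext (by simpa using congrArg Fin.val hEq)
            · rintro rfl; rfl
          split_ifs <;> simp_all
      rw [hz, hgsum, zero_mul, sub_zero] at h
      rcases mul_eq_zero.1 h with h' | h'
      · exact h'
      · exact absurd h' (ne_of_gt hBpos)
    have hmemF : ∀ j : Fin (d-1), f j ∈ vectorSpan ℝ F := by
      intro j
      have hpP : Pi.single (Fin.castLE (Nat.sub_le d 1) j) B ∈ grlexP d θ := by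
        apply subset_convexHull
        refine ⟨fun i => if i = Fin.castLE (Nat.sub_le d 1) j then bsum θ else 0, ?_, ?_, ?_⟩
        · intro i; dsimp only; split_ifs <;> omega
        · refine Or.inr ⟨by simp [bsum], Or.inr ⟨⟨d-1, by omega⟩, ?_, ?_⟩⟩
          · have hne : (⟨d - 1, by omega⟩ : Fin d) ≠ Fin.castLE (Nat.sub_le d 1) j := by
              intro hEq
              have := congrArg Fin.val hEq
              simp at this
              omega
            simp only [hne, if_neg]
            · exact lt_of_lt_of_le one_pos (hθ _)
          · intro k hk
            exfalso
            have := k.isLt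
            have h2 : d - 1 < k.val := hk
            omega
        · funext i
          simp only [toR, Pi.single_apply, hB]
          split_ifs <;> simp
      have hpF : Pi.single (Fin.castLE (Nat.sub_le d 1) j) B ∈ F := by
        refine ⟨hpP, ?_⟩
        simp [hB]
      have hθF : toR θ ∈ F := ⟨hθS, hθsum⟩
      have := vsub_mem_vectorSpan ℝ hpF hθF
      simpa [hf] using this
    have hlow : d - 1 ≤ Module.finrank ℝ (vectorSpan ℝ F) := by
      have h1 : Submodule.span ℝ (Set.range f) ≤ vectorSpan ℝ F := by
        apply Submodule.span_le.2; rintro _ ⟨j, rfl⟩; exact hmemF j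
      have h2 : Module.finrank ℝ (Submodule.span ℝ (Set.range f)) = d - 1 := by
        rw [finrank_span_eq_card hli]; simp
      exact h2 ▸ Submodule.finrank_mono h1
    have hhigh : Module.finrank ℝ (vectorSpan ℝ F) ≤ d - 1 :=
      hker ▸ Submodule.finrank_mono hFle
    have hadimF : adim F = d - 1 := le_antisymm hhigh hlow
    rw [hadimF, hadimP]
    omega
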